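/- arXiv:math-ph/0512089 — 2 statements merged into one kernel-verified Lean document; each statement's English description precedes it below -/
import Mathlib

section
/- Let $\mathcal{L}_k \subset \mathbb{R}^{2n}$ be a $k$-dimensional isotropic subspace and $r$ an $n$-dimensional isotropic positive complex subspace of $\mathbb{C}^{2n}$, with $r_\perp = r \cap (\mathcal{L}_k^{\mathbb{C}})^{\perp\omega}$. Then the subspace $\check r = r_\perp + \mathcal{L}_k^{\mathbb{C}}$ satisfies: $r_\perp \cap \mathcal{L}_k^{\mathbb{C}} = \{0\}$, $\dim_{\mathbb{C}} \check r = n$, $\check r$ is isotropic for $\omega$, $\omega(Y,Y^*)=0$ for $Y \in \mathcal{L}_k^{\mathbb{C}}$, and $\frac{1}{i}\omega(Y,Y^*) > 0$ for every $Y \in \check r \setminus \mathcal{L}_k^{\mathbb{C}}$. -/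
open scoped BigOperators

/-- The complexified phase space `ℂ^{2n}`. -/
abbrev CPhase (n : ℕ) := (Fin n → ℂ) × (Fin n → ℂ)

/-- Complex bilinear extension of the standard symplectic form. -/
noncomputable def symplFormC (n : ℕ) (X Y : CPhase n) : ℂ :=
  ∑ j, (X.1 j * Y.2 j - Y.1 j * X.2 j)

/-- Componentwise complex conjugation `Y ↦ Y^*`. -/
def conjV (n : ℕ) (Y : CPhase n) : CPhase n :=
  (fun j => (starRingEnd ℂ) (Y.1 j), fun j => (starRingEnd ℂ) (Y.2 j))

def IsIsotropicC (n : ℕ) (r : Submodule ℂ (CPhase n)) : Prop :=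
  ∀ X ∈ r, ∀ Y ∈ r, symplFormC n X Y = 0

/-- Positivity: `(1/i) ω(Y, Y^*) > 0` (a positive real number) for nonzero `Y ∈ r`. -/
def IsPositiveGerm (n : ℕ) (r : Submodule ℂ (CPhase n)) : Prop :=
  ∀ Y ∈ r, Y ≠ 0 →
    0 < (-Complex.I * symplFormC n Y (conjV n Y)).re ∧
    (-Complex.I * symplFormC n Y (conjV n Y)).im = 0

/-- The standard symplectic form on the real phase space `ℝ^{2n}`. -/
noncomputable def symplForm (n : ℕ) (X Y : (Fin n → ℝ) × (Fin n → ℝ)) : ℝ :=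
  ∑ j, (X.1 j * Y.2 j - Y.1 j * X.2 j)

def IsIsotropic (n : ℕ) (V : Submodule ℝ ((Fin n → ℝ) × (Fin n → ℝ))) : Prop :=
  ∀ X ∈ V, ∀ Y ∈ V, symplForm n X Y = 0

/-- Inclusion of the real phase space into its complexification. -/
def incC (n : ℕ) (X : (Fin n → ℝ) × (Fin n → ℝ)) : CPhase n :=
  (fun j => (X.1 j : ℂ), fun j => (X.2 j : ℂ))

/-- The complexification `L^ℂ` of a real subspace `L ⊂ ℝ^{2n}` inside `ℂ^{2n}`. -/
noncomputable def complexify (n : ℕ) (L : Submodule ℝ ((Fin n → ℝ) × (Fin n → ℝ))) :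
    Submodule ℂ (CPhase n) :=
  Submodule.span ℂ (incC n '' (L : Set ((Fin n → ℝ) × (Fin n → ℝ))))

/-- The skew-orthogonal complement `V^{⊥ω}` in `ℂ^{2n}`, as a subspace. -/
noncomputable def skewPerpC (n : ℕ) (V : Submodule ℂ (CPhase n)) : Submodule ℂ (CPhase n) where
  carrier := {Y | ∀ X ∈ V, symplFormC n Y X = 0}
  add_mem' := by
    intro a b ha hb X hX
    have h1 := ha X hX
    have h2 := hb X hX
    have hsplit : ∀ j ∈ Finset.univ,
        ((a + b).1 j * X.2 j - X.1 j * (a + b).2 j) =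
          (a.1 j * X.2 j - X.1 j * a.2 j) + (b.1 j * X.2 j - X.1 j * b.2 j) := by
      intro j _
      simp only [Prod.fst_add, Prod.snd_add, Pi.add_apply]
      ring
    show symplFormC n (a + b) X = 0
    rw [symplFormC, Finset.sum_congr rfl hsplit, Finset.sum_add_distrib]
    rw [symplFormC] at h1 h2
    rw [h1, h2, add_zero]
  zero_mem' := by
    intro X hX
    simp [symplFormC]
  smul_mem' := by
    intro c a ha X hX
    have h1 := ha X hX
    have hsplit : ∀ j ∈ Finset.univ,
        ((c • a).1 j * X.2 j - X.1 j * (c • a).2 j) =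
          c * (a.1 j * X.2 j - X.1 j * a.2 j) := by
      intro j _
      simp only [Prod.smul_fst, Prod.smul_snd, Pi.smul_apply, smul_eq_mul]
      ring
    show symplFormC n (c • a) X = 0
    rw [symplFormC, Finset.sum_congr rfl hsplit, ← Finset.mul_sum]
    rw [symplFormC] at h1
    rw [h1, mul_zero]

open Module

/-- The symplectic form as a bilinear map. -/
noncomputable def sB (n : ℕ) : LinearMap.BilinForm ℂ (CPhase n) :=
  LinearMap.mk₂ ℂ (symplFormC n)
    (by intro X X' Y
        simp only [symplFormC, ← Finset.sum_add_distrib]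
        apply Finset.sum_congr rfl; intro j _
        simp only [Prod.fst_add, Prod.snd_add, Pi.add_apply]; ring)
    (by intro c X Y
        simp only [symplFormC, smul_eq_mul, Finset.mul_sum]
        apply Finset.sum_congr rfl; intro j _
        simp only [Prod.smul_fst, Prod.smul_snd, Pi.smul_apply, smul_eq_mul]; ring)
    (by intro X Y Y'
        simp only [symplFormC, ← Finset.sum_add_distrib]
        apply Finset.sum_congr rfl; intro j _
        simp only [Prod.fst_add, Prod.snd_add, Pi.add_apply]; ring)
    (by intro c X Y
        simp only [symplFormC, smul_eq_mul, Finset.mul_sum]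
        apply Finset.sum_congr rfl; intro j _
        simp only [Prod.smul_fst, Prod.smul_snd, Pi.smul_apply, smul_eq_mul]; ring)

lemma sB_apply (n : ℕ) (X Y : CPhase n) : sB n X Y = symplFormC n X Y := rfl

lemma sB_alt (n : ℕ) : (sB n).IsAlt := by
  intro X
  simp only [sB_apply, symplFormC]
  apply Finset.sum_eq_zero; intro j _; ring

lemma sB_skew (n : ℕ) (X Y : CPhase n) : sB n X Y = - sB n Y X := by
  simp only [sB_apply, symplFormC, ← Finset.sum_neg_distrib]
  apply Finset.sum_congr rfl; intro j _; ring

lemma sB_nondeg (n : ℕ) : (sB n).Nondegenerate := by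
  suffices hL : (sB n).SeparatingLeft from ⟨hL, fun Y hY => hL Y fun X => by rw [sB_skew, hY X, neg_zero]⟩
  intro Y hY
  have h1 : ∀ j, Y.1 j = 0 := by
    intro j
    have := hY ((0 : Fin n → ℂ), Pi.single j 1)
    simpa [sB_apply, symplFormC, Pi.single_apply, Finset.sum_ite_eq', mul_comm] using this
  have h2 : ∀ j, Y.2 j = 0 := by
    intro j
    have := hY ((Pi.single j 1 : Fin n → ℂ), 0)
    have h := this
    simp only [sB_apply, symplFormC] at h
    simp [Pi.single_apply, Finset.sum_sub_distrib, Finset.sum_ite_eq'] at h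
    simpa using h
  ext j
  · exact h1 j
  · exact h2 j
lemma conjV_add (n : ℕ) (X Y : CPhase n) : conjV n (X + Y) = conjV n X + conjV n Y := by
  simp only [conjV, Prod.fst_add, Prod.snd_add, Pi.add_apply, map_add]
  rfl

lemma conjV_smul (n : ℕ) (c : ℂ) (Y : CPhase n) :
    conjV n (c • Y) = (starRingEnd ℂ) c • conjV n Y := by
  simp only [conjV, Prod.smul_fst, Prod.smul_snd, Pi.smul_apply, smul_eq_mul, map_mul]
  rfl

lemma conjV_conjV (n : ℕ) (Y : CPhase n) : conjV n (conjV n Y) = Y := by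
  simp only [conjV, Complex.conj_conj]

lemma conjV_incC (n : ℕ) (X : (Fin n → ℝ) × (Fin n → ℝ)) : conjV n (incC n X) = incC n X := by
  simp only [conjV, incC, Complex.conj_ofReal]

lemma sB_conj (n : ℕ) (X Y : CPhase n) :
    sB n (conjV n X) (conjV n Y) = (starRingEnd ℂ) (sB n X Y) := by
  simp only [sB_apply, symplFormC, map_sum, map_sub, map_mul, conjV]

lemma conjV_mem_complexify (n : ℕ) (L : Submodule ℝ ((Fin n → ℝ) × (Fin n → ℝ)))
    {Y : CPhase n} (hY : Y ∈ complexify n L) : conjV n Y ∈ complexify n L := by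
  induction hY using Submodule.span_induction with
  | mem x hx =>
    obtain ⟨a, ha, rfl⟩ := hx
    rw [conjV_incC]
    exact Submodule.subset_span ⟨a, ha, rfl⟩
  | zero =>
    have : conjV n (0 : CPhase n) = 0 := by
      simp only [conjV, Prod.fst_zero, Prod.snd_zero, Pi.zero_apply, map_zero]; rfl
    rw [this]; exact (complexify n L).zero_mem
  | add x y _ _ hx hy => rw [conjV_add]; exact Submodule.add_mem _ hx hy
  | smul c x _ hx => rw [conjV_smul]; exact Submodule.smul_mem _ _ hx

lemma complexify_isotropic (n : ℕ) (L : Submodule ℝ ((Fin n → ℝ) × (Fin n → ℝ)))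
    (hLiso : IsIsotropic n L) : IsIsotropicC n (complexify n L) := by
  have key : ∀ X ∈ complexify n L, ∀ Y ∈ complexify n L, sB n X Y = 0 := by
    have h1 : ∀ a ∈ L, ∀ Y ∈ complexify n L, sB n (incC n a) Y = 0 := by
      intro a ha
      have : complexify n L ≤ LinearMap.ker (sB n (incC n a)) := by
        rw [complexify, Submodule.span_le]
        rintro _ ⟨b, hb, rfl⟩
        simp only [SetLike.mem_coe, LinearMap.mem_ker, sB_apply, symplFormC]
        have := hLiso a ha b hb
        rw [symplForm] at this
        calc ∑ j, ((incC n a).1 j * (incC n b).2 j - (incC n b).1 j * (incC n a).2 j)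
            = ((∑ j, (a.1 j * b.2 j - b.1 j * a.2 j) : ℝ) : ℂ) := by
              push_cast [incC]; rfl
          _ = 0 := by rw [this]; norm_num
      intro Y hY
      exact this hY
    intro X hX Y hY
    induction hX using Submodule.span_induction with
    | mem x hx => obtain ⟨a, ha, rfl⟩ := hx; exact h1 a ha Y hY
    | zero => simp
    | add x y _ _ hx hy => rw [map_add, LinearMap.add_apply, hx, hy, add_zero]
    | smul c x _ hx => rw [map_smul, LinearMap.smul_apply, hx, smul_zero]
  intro X hX Y hY
  exact key X hX Y hY
/-- `incC` as an `ℝ`-linear map. -/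
noncomputable def incL (n : ℕ) : ((Fin n → ℝ) × (Fin n → ℝ)) →ₗ[ℝ] CPhase n where
  toFun := incC n
  map_add' X Y := by
    simp only [incC, Prod.fst_add, Prod.snd_add, Pi.add_apply, Complex.ofReal_add]
    rfl
  map_smul' c X := by
    simp only [incC, Prod.smul_fst, Prod.smul_snd, Pi.smul_apply, smul_eq_mul,
      Complex.ofReal_mul, RingHom.id_apply]
    ext j <;> simp [Complex.real_smul]

lemma finrank_complexify (n : ℕ) (L : Submodule ℝ ((Fin n → ℝ) × (Fin n → ℝ))) :
    Module.finrank ℂ (complexify n L) = Module.finrank ℝ L := by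
  classical
  set m := Module.finrank ℝ L with hm
  obtain b := Module.finBasis ℝ L
  set v : Fin m → CPhase n := fun i => incC n (b i : _) with hv
  have hspan : Submodule.span ℂ (Set.range v) = complexify n L := by
    apply le_antisymm
    · rw [Submodule.span_le]
      rintro _ ⟨i, rfl⟩
      exact Submodule.subset_span ⟨(b i : _), (b i).2, rfl⟩
    · rw [complexify, Submodule.span_le]
      rintro _ ⟨a, ha, rfl⟩
      have hrep : (⟨a, ha⟩ : L) = ∑ i, b.repr ⟨a, ha⟩ i • b i := (b.sum_repr ⟨a, ha⟩).symm
      have hval : a = ∑ i, b.repr ⟨a, ha⟩ i • (b i : (Fin n → ℝ) × (Fin n → ℝ)) := by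
        have := congrArg (Subtype.val) hrep
        exact this.trans (by rw [Submodule.coe_sum]; simp only [Submodule.coe_smul])
      have : incC n a = ∑ i, ((b.repr ⟨a, ha⟩ i : ℝ) : ℂ) • v i := by
        conv_lhs => rw [hval]
        rw [show incC n = incL n from rfl, map_sum]
        apply Finset.sum_congr rfl
        intro i _
        rw [map_smul]
        simp [hv, Complex.real_smul, incL]
      rw [this]
      exact Submodule.sum_mem _ fun i _ => Submodule.smul_mem _ _ (Submodule.subset_span ⟨i, rfl⟩)
  have hli : LinearIndependent ℂ v := by
    rw [Fintype.linearIndependent_iff]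
    intro g hg i
    have hcomp1 : ∀ j, ∑ i, g i * ((b i : (Fin n → ℝ) × (Fin n → ℝ)).1 j : ℂ) = 0 := by
      intro j
      have := congrArg (fun Y : CPhase n => Y.1 j) hg
      simpa [v, incC, Finset.sum_apply, Prod.fst_sum] using this
    have hcomp2 : ∀ j, ∑ i, g i * ((b i : (Fin n → ℝ) × (Fin n → ℝ)).2 j : ℂ) = 0 := by
      intro j
      have := congrArg (fun Y : CPhase n => Y.2 j) hg
      simpa [v, incC, Finset.sum_apply, Prod.snd_sum] using this
    have hre : ∀ i, (g i).re = 0 := by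
      have : (∑ i, (g i).re • b i) = 0 := by
        apply Subtype.ext
        have hcoe : ((∑ i, (g i).re • b i : L) : (Fin n → ℝ) × (Fin n → ℝ))
            = ∑ i, (g i).re • (b i : (Fin n → ℝ) × (Fin n → ℝ)) := by
          push_cast; rfl
        rw [hcoe]
        apply Prod.ext <;> funext j
        · have := congrArg Complex.re (hcomp1 j)
          simpa [Complex.re_sum, Finset.sum_apply, Prod.fst_sum] using this
        · have := congrArg Complex.re (hcomp2 j)
          simpa [Complex.re_sum, Finset.sum_apply, Prod.snd_sum] using this
      exact Fintype.linearIndependent_iff.mp b.linearIndependent _ this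
    have him : ∀ i, (g i).im = 0 := by
      have : (∑ i, (g i).im • b i) = 0 := by
        apply Subtype.ext
        have hcoe : ((∑ i, (g i).im • b i : L) : (Fin n → ℝ) × (Fin n → ℝ))
            = ∑ i, (g i).im • (b i : (Fin n → ℝ) × (Fin n → ℝ)) := by
          push_cast; rfl
        rw [hcoe]
        apply Prod.ext <;> funext j
        · have := congrArg Complex.im (hcomp1 j)
          simpa [Complex.im_sum, Finset.sum_apply, Prod.fst_sum] using this
        · have := congrArg Complex.im (hcomp2 j)
          simpa [Complex.im_sum, Finset.sum_apply, Prod.snd_sum] using this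
      exact Fintype.linearIndependent_iff.mp b.linearIndependent _ this
    exact Complex.ext (hre i) (him i)
  rw [← hspan, finrank_span_eq_card hli, Fintype.card_fin]
lemma skewPerpC_eq_orthogonal (n : ℕ) (V : Submodule ℂ (CPhase n)) :
    skewPerpC n V = (sB n).orthogonal V := by
  ext Y
  constructor
  · intro h X hX
    have h0 : symplFormC n Y X = 0 := h X hX
    show sB n X Y = 0
    rw [sB_skew, sB_apply, h0, neg_zero]
  · intro h X hX
    have h0 : sB n X Y = 0 := h X hX
    show symplFormC n Y X = 0
    rw [← sB_apply, sB_skew, h0, neg_zero]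

lemma mem_skewPerpC {n : ℕ} {V : Submodule ℂ (CPhase n)} {Y : CPhase n} :
    Y ∈ skewPerpC n V ↔ ∀ X ∈ V, symplFormC n Y X = 0 := Iff.rfl

lemma finrank_CPhase (n : ℕ) : Module.finrank ℂ (CPhase n) = 2 * n := by
  have : Module.finrank ℂ ((Fin n → ℂ) × (Fin n → ℂ)) = 2 * n := by
    rw [Module.finrank_prod]
    simp [Module.finrank_pi]
    ring
  exact this

lemma finrank_add_finrank_skewPerpC (n : ℕ) (V : Submodule ℂ (CPhase n)) :
    Module.finrank ℂ V + Module.finrank ℂ (skewPerpC n V) = 2 * n := by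
  rw [skewPerpC_eq_orthogonal]
  have := LinearMap.BilinForm.finrank_add_finrank_orthogonal (B := sB n) (sB_alt n).isRefl V
  rw [LinearMap.BilinForm.orthogonal_top_eq_bot (sB_nondeg n), inf_bot_eq, finrank_bot,
    add_zero, finrank_CPhase] at this
  exact this
theorem stmt_8 (n k : ℕ)
    (L : Submodule ℝ ((Fin n → ℝ) × (Fin n → ℝ)))
    (hLdim : Module.finrank ℝ L = k) (hLiso : IsIsotropic n L)
    (r : Submodule ℂ (CPhase n))
    (hrdim : Module.finrank ℂ r = n)
    (hriso : IsIsotropicC n r) (hrpos : IsPositiveGerm n r) :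
    let Lc := complexify n L
    let rperp := r ⊓ skewPerpC n Lc
    let rcheck := rperp ⊔ Lc
    rperp ⊓ Lc = ⊥ ∧
    Module.finrank ℂ ↥rcheck = n ∧
    IsIsotropicC n rcheck ∧
    (∀ Y ∈ Lc, symplFormC n Y (conjV n Y) = 0) ∧
    (∀ Y ∈ rcheck, Y ∉ Lc →
      0 < (-Complex.I * symplFormC n Y (conjV n Y)).re ∧
      (-Complex.I * symplFormC n Y (conjV n Y)).im = 0) := by
  intro Lc rperp rcheck
  have hLcIso : IsIsotropicC n Lc := complexify_isotropic n L hLiso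
  -- part 4
  have part4 : ∀ Y ∈ Lc, symplFormC n Y (conjV n Y) = 0 := by
    intro Y hY
    exact hLcIso Y hY (conjV n Y) (conjV_mem_complexify n L hY)
  -- part 1
  have part1 : rperp ⊓ Lc = ⊥ := by
    rw [eq_bot_iff]
    rintro Y ⟨hY1, hYL⟩
    obtain ⟨hYr, hYperp⟩ := Submodule.mem_inf.mp hY1
    have hYc : conjV n Y ∈ Lc := conjV_mem_complexify n L hYL
    have h0 : symplFormC n Y (conjV n Y) = 0 := hYperp (conjV n Y) hYc
    rw [Submodule.mem_bot]
    by_contra hY0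
    have := (hrpos Y hYr hY0).1
    rw [h0] at this
    simp at this
  -- isotropy of rcheck
  have part3 : IsIsotropicC n rcheck := by
    intro X hX Y hY
    obtain ⟨x1, hx1, x2, hx2, rfl⟩ := Submodule.mem_sup.mp hX
    obtain ⟨y1, hy1, y2, hy2, rfl⟩ := Submodule.mem_sup.mp hY
    obtain ⟨hx1r, hx1p⟩ := Submodule.mem_inf.mp hx1
    obtain ⟨hy1r, hy1p⟩ := Submodule.mem_inf.mp hy1
    have e11 : sB n x1 y1 = 0 := hriso x1 hx1r y1 hy1r
    have e12 : sB n x1 y2 = 0 := hx1p y2 hy2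
    have e21 : sB n x2 y1 = 0 := by
      rw [sB_skew]
      have : sB n y1 x2 = 0 := hy1p x2 hx2
      rw [this, neg_zero]
    have e22 : sB n x2 y2 = 0 := hLcIso x2 hx2 y2 hy2
    show sB n (x1 + x2) (y1 + y2) = 0
    rw [map_add, map_add (sB n) x1 x2, LinearMap.add_apply, LinearMap.add_apply,
      e11, e12, e21, e22]
    simp
  -- dimension count
  have part2 : Module.finrank ℂ ↥rcheck = n := by
    have hLc : Module.finrank ℂ Lc = k := by rw [finrank_complexify, hLdim]
    have hP : Module.finrank ℂ Lc + Module.finrank ℂ (skewPerpC n Lc) = 2 * n :=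
      finrank_add_finrank_skewPerpC n Lc
    have e2 : Module.finrank ℂ ↥(r ⊔ skewPerpC n Lc) + Module.finrank ℂ ↥rperp
        = Module.finrank ℂ r + Module.finrank ℂ (skewPerpC n Lc) :=
      Submodule.finrank_sup_add_finrank_inf_eq r (skewPerpC n Lc)
    have e3 : Module.finrank ℂ ↥(r ⊔ skewPerpC n Lc) ≤ 2 * n := by
      have := Submodule.finrank_le (r ⊔ skewPerpC n Lc)
      rwa [finrank_CPhase] at this
    have e4 : Module.finrank ℂ ↥rcheck + Module.finrank ℂ ↥(rperp ⊓ Lc)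
        = Module.finrank ℂ ↥rperp + Module.finrank ℂ Lc :=
      Submodule.finrank_sup_add_finrank_inf_eq rperp Lc
    rw [part1, finrank_bot, add_zero] at e4
    -- upper bound from isotropy
    have e5 : 2 * Module.finrank ℂ ↥rcheck ≤ 2 * n := by
      have hle : rcheck ≤ skewPerpC n rcheck := by
        intro Y hY
        exact fun X hX => part3 Y hY X hX
      have := Submodule.finrank_mono hle
      have hsum := finrank_add_finrank_skewPerpC n rcheck
      omega
    rw [hrdim, hLc] at *
    omega
  refine ⟨part1, part2, part3, part4, ?_⟩
  -- part 5
  intro Y hY hYnL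
  obtain ⟨y, hy, z, hz, rfl⟩ := Submodule.mem_sup.mp hY
  obtain ⟨hyr, hyp⟩ := Submodule.mem_inf.mp hy
  have hy0 : y ≠ 0 := by
    rintro rfl
    rw [zero_add] at hYnL
    exact hYnL hz
  have hzc : conjV n z ∈ Lc := conjV_mem_complexify n L hz
  have e1 : sB n y (conjV n z) = 0 := hyp (conjV n z) hzc
  have e2 : sB n z (conjV n y) = 0 := by
    rw [sB_skew]
    have : sB n (conjV n y) z = 0 := by
      have := sB_conj n y (conjV n z)
      rw [conjV_conjV] at this
      rw [this, e1, map_zero]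
    rw [this, neg_zero]
  have e3 : sB n z (conjV n z) = 0 := part4 z hz
  have key : symplFormC n (y + z) (conjV n (y + z)) = symplFormC n y (conjV n y) := by
    rw [← sB_apply, ← sB_apply, conjV_add, map_add, map_add (sB n) y z,
      LinearMap.add_apply, LinearMap.add_apply, e1, e2, e3]
    simp
  rw [key]
  exact hrpos y hyr hy0
end

section
/- Let $\mathcal{L}_k \subset \mathbb{R}^{2n}$ be a $k$-dimensional isotropic subspace and let $\check r \subset \mathbb{C}^{2n}$ be an $n$-dimensional complex subspace satisfying: (i) $\omega(Y_1,Y_2)=0$ for $Y_1,Y_2 \in \check r$; (ii) $\mathcal{L}_k^{\mathbb{C}} \subset \check r$ and $\omega(Y,Y^*)=0$ for $Y \in \mathcal{L}_k^{\mathbb{C}}$; (iii) $\frac{1}{i}\omega(Y,Y^*)>0$ for $Y \in \check r \setminus \mathcal{L}_k^{\mathbb{C}}$. Then $(\mathcal{L}_k^{\mathbb{C}})^{\perp\omega} = \check r + \check r^*$ and $\check r \cap \check r^* = \mathcal{L}_k^{\mathbb{C}}$. -/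
open scoped BigOperators

namespace Stmt9Aux

open Module

variable (n : ℕ)

lemma conjV_conjV (Y : CPhase n) : conjV n (conjV n Y) = Y := by
  simp [conjV]

lemma conjV_add (A B : CPhase n) : conjV n (A + B) = conjV n A + conjV n B := by
  simp [conjV, Prod.ext_iff]
  constructor <;> funext j <;> simp

lemma conjV_smul (c : ℂ) (A : CPhase n) :
    conjV n (c • A) = (starRingEnd ℂ c) • conjV n A := by
  simp [conjV, Prod.ext_iff]
  constructor <;> funext j <;> simp

lemma conjV_smul_real (r : ℝ) (A : CPhase n) :
    conjV n (r • A) = r • conjV n A := by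
  simp [conjV, Prod.ext_iff]
  constructor <;> funext j <;> simp [Complex.conj_ofReal]

lemma conjV_zero : conjV n 0 = 0 := by
  simp [conjV, Prod.ext_iff]
  constructor <;> rfl

lemma symplFormC_conj (A B : CPhase n) :
    symplFormC n (conjV n A) (conjV n B) = (starRingEnd ℂ) (symplFormC n A B) := by
  rw [symplFormC, symplFormC, map_sum]
  exact Finset.sum_congr rfl fun j _ => by simp [conjV]

lemma symplFormC_skew (A B : CPhase n) :
    symplFormC n A B = - symplFormC n B A := by
  rw [symplFormC, symplFormC, ← Finset.sum_neg_distrib]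
  exact Finset.sum_congr rfl fun j _ => by ring

noncomputable def B : LinearMap.BilinForm ℂ (CPhase n) :=
  LinearMap.mk₂ ℂ (symplFormC n)
    (fun m₁ m₂ x => by
      rw [symplFormC, symplFormC, symplFormC, ← Finset.sum_add_distrib]
      exact Finset.sum_congr rfl fun j _ => by
        simp only [Prod.fst_add, Prod.snd_add, Pi.add_apply]; ring)
    (fun c m x => by
      rw [symplFormC, symplFormC, smul_eq_mul, Finset.mul_sum]
      exact Finset.sum_congr rfl fun j _ => by
        simp only [Prod.smul_fst, Prod.smul_snd, Pi.smul_apply, smul_eq_mul]; ring)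
    (fun m x₁ x₂ => by
      rw [symplFormC, symplFormC, symplFormC, ← Finset.sum_add_distrib]
      exact Finset.sum_congr rfl fun j _ => by
        simp only [Prod.fst_add, Prod.snd_add, Pi.add_apply]; ring)
    (fun c m x => by
      rw [symplFormC, symplFormC, smul_eq_mul, Finset.mul_sum]
      exact Finset.sum_congr rfl fun j _ => by
        simp only [Prod.smul_fst, Prod.smul_snd, Pi.smul_apply, smul_eq_mul]; ring)

@[simp] lemma B_apply (X Y : CPhase n) : B n X Y = symplFormC n X Y := rfl

lemma B_refl : (B n).IsRefl := by
  intro x y h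
  rw [B_apply, symplFormC_skew] at h ⊢
  rw [symplFormC_skew] at h
  simpa using h

lemma B_nondeg : (B n).Nondegenerate := by
  refine (LinearMap.IsRefl.nondegenerate_iff_separatingLeft (B_refl n)).mpr ?_
  intro Y h
  have h1 : ∀ j, Y.1 j = 0 := by
    intro j
    have := h (0, Pi.single j 1)
    simp only [B_apply, symplFormC] at this
    simpa [Pi.single_apply, Finset.sum_ite_eq', mul_comm] using this
  have h2 : ∀ j, Y.2 j = 0 := by
    intro j
    have := h (Pi.single j 1, 0)
    simp only [B_apply, symplFormC] at this
    simpa [Pi.single_apply, Finset.sum_ite_eq', mul_comm] using this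
  ext j
  · exact h1 j
  · exact h2 j

lemma finrank_CPhase : finrank ℂ (CPhase n) = 2 * n := by
  simp [Module.finrank_prod, Module.finrank_pi]; ring

end Stmt9Aux

namespace Stmt9Aux

open Module

variable (n : ℕ)

/-- conjugation preserves the complexification. -/
lemma conjV_mem_complexify (L : Submodule ℝ ((Fin n → ℝ) × (Fin n → ℝ))) {Z : CPhase n}
    (hZ : Z ∈ complexify n L) : conjV n Z ∈ complexify n L := by
  rw [complexify] at hZ ⊢
  induction hZ using Submodule.span_induction with
  | mem x hx =>
    obtain ⟨X, hX, rfl⟩ := hx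
    have hfix : conjV n (incC n X) = incC n X := by
      simp only [conjV, incC, Prod.mk.injEq]
      constructor <;> funext j <;> simp [Complex.conj_ofReal]
    rw [hfix]
    exact Submodule.subset_span ⟨X, hX, rfl⟩
  | zero => rw [conjV_zero]; exact zero_mem _
  | add x y hx hy ihx ihy => rw [conjV_add]; exact add_mem ihx ihy
  | smul c x hx ih => rw [conjV_smul]; exact Submodule.smul_mem _ _ ih

/-- The conjugate submodule `r^*`. -/
noncomputable def conjSubmodule (r : Submodule ℂ (CPhase n)) : Submodule ℂ (CPhase n) where
  carrier := conjV n '' r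
  zero_mem' := ⟨0, r.zero_mem, conjV_zero n⟩
  add_mem' := by
    rintro a b ⟨a', ha', rfl⟩ ⟨b', hb', rfl⟩
    exact ⟨a' + b', r.add_mem ha' hb', (conjV_add n a' b').symm ▸ rfl⟩
  smul_mem' := by
    rintro c x ⟨a, ha, rfl⟩
    refine ⟨(starRingEnd ℂ) c • a, r.smul_mem _ ha, ?_⟩
    rw [conjV_smul]
    simp

lemma mem_conjSubmodule {r : Submodule ℂ (CPhase n)} {Z : CPhase n} :
    Z ∈ conjSubmodule n r ↔ ∃ Y, Y ∈ r ∧ conjV n Y = Z := Iff.rfl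

/-- `r` and `r^*` are ℝ-linearly equivalent. -/
noncomputable def conjEquivSub (r : Submodule ℂ (CPhase n)) : r ≃ₗ[ℝ] conjSubmodule n r where
  toFun x := ⟨conjV n x, ⟨x.1, x.2, rfl⟩⟩
  invFun y := ⟨conjV n y, by
    obtain ⟨a, ha, hae⟩ := y.2
    rw [← hae, conjV_conjV]; exact ha⟩
  left_inv x := by ext : 1; simp [conjV_conjV]
  right_inv y := by ext : 1; simp [conjV_conjV]
  map_add' x y := by ext : 1; simp [conjV_add]
  map_smul' c x := by ext : 1; simp [conjV_smul_real]

lemma finrank_conjSubmodule (r : Submodule ℂ (CPhase n)) :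
    finrank ℂ (conjSubmodule n r) = finrank ℂ r := by
  have h1 : finrank ℝ r = finrank ℝ (conjSubmodule n r) := (conjEquivSub n r).finrank_eq
  have h2 : finrank ℝ ℂ * finrank ℂ r = finrank ℝ r := Module.finrank_mul_finrank ℝ ℂ r
  have h3 : finrank ℝ ℂ * finrank ℂ (conjSubmodule n r) = finrank ℝ (conjSubmodule n r) :=
    Module.finrank_mul_finrank ℝ ℂ _
  rw [Complex.finrank_real_complex] at h2 h3
  omega

end Stmt9Aux

namespace Stmt9Aux

open Module

variable (n : ℕ)

lemma mem_skewPerpC {V : Submodule ℂ (CPhase n)} {Z : CPhase n} :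
    Z ∈ skewPerpC n V ↔ ∀ X ∈ V, symplFormC n Z X = 0 := Iff.rfl

lemma symplFormC_skew' (A B : CPhase n) :
    symplFormC n A B = - symplFormC n B A := symplFormC_skew n A B

lemma skewPerp_eq (V : Submodule ℂ (CPhase n)) : skewPerpC n V = (B n).orthogonal V := by
  ext Z
  rw [mem_skewPerpC, LinearMap.BilinForm.mem_orthogonal_iff]
  constructor
  · intro h X hX
    show B n X Z = 0
    rw [B_apply, symplFormC_skew, h X hX, neg_zero]
  · intro h X hX
    have : B n X Z = 0 := h X hX
    rw [B_apply] at this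
    rw [symplFormC_skew, this, neg_zero]

lemma finrank_skewPerp (V : Submodule ℂ (CPhase n)) :
    finrank ℂ (skewPerpC n V) + finrank ℂ V = 2 * n := by
  rw [skewPerp_eq]
  have h := LinearMap.BilinForm.finrank_add_finrank_orthogonal (B_refl n) V
  have hbot : V ⊓ (B n).orthogonal ⊤ = ⊥ := by
    rw [eq_bot_iff]
    rintro x ⟨-, hx2⟩
    have hx0 : x = 0 := by
      refine (B_nondeg n).1 x (fun m => ?_)
      exact (B_refl n) m x (hx2 m trivial)
    simp [hx0]
  rw [hbot, finrank_bot, add_zero, finrank_CPhase] at h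
  omega

end Stmt9Aux

theorem stmt_9 (n k : ℕ)
    (L : Submodule ℝ ((Fin n → ℝ) × (Fin n → ℝ)))
    (hLdim : Module.finrank ℝ L = k) (hLiso : IsIsotropic n L)
    (rcheck : Submodule ℂ (CPhase n))
    (hdim : Module.finrank ℂ rcheck = n)
    -- (i) isotropy
    (hiso : IsIsotropicC n rcheck)
    -- (ii) L^ℂ ⊂ ř and ω(Y, Y^*) = 0 on L^ℂ
    (hsub : complexify n L ≤ rcheck)
    (hnull : ∀ Y ∈ complexify n L, symplFormC n Y (conjV n Y) = 0)
    -- (iii) positivity outside L^ℂ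
    (hpos : ∀ Y ∈ rcheck, Y ∉ complexify n L →
      0 < (-Complex.I * symplFormC n Y (conjV n Y)).re ∧
      (-Complex.I * symplFormC n Y (conjV n Y)).im = 0) :
    -- (L^ℂ)^{⊥ω} = ř + ř^*
    (∀ Z : CPhase n, Z ∈ skewPerpC n (complexify n L) ↔
      ∃ Y₁ ∈ rcheck, ∃ Y₂ ∈ rcheck, Z = Y₁ + conjV n Y₂) ∧
    -- ř ∩ ř^* = L^ℂ
    (∀ Z : CPhase n, (Z ∈ rcheck ∧ ∃ Y ∈ rcheck, Z = conjV n Y) ↔ Z ∈ complexify n L) := by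
  classical
  have hconjmem : ∀ {Z : CPhase n}, Z ∈ complexify n L → conjV n Z ∈ complexify n L :=
    fun hZ => Stmt9Aux.conjV_mem_complexify n L hZ
  -- Claim 2
  have claim2 : ∀ Z : CPhase n,
      (Z ∈ rcheck ∧ ∃ Y ∈ rcheck, Z = conjV n Y) ↔ Z ∈ complexify n L := by
    intro Z
    constructor
    · rintro ⟨hZr, Y, hY, rfl⟩
      by_contra hnot
      have h0 : symplFormC n (conjV n Y) (conjV n (conjV n Y)) = 0 := by
        rw [Stmt9Aux.conjV_conjV]
        exact hiso _ hZr _ hY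
      have hp := (hpos _ hZr hnot).1
      rw [h0] at hp
      simp at hp
    · intro hZ
      exact ⟨hsub hZ, conjV n Z, hsub (hconjmem hZ), (Stmt9Aux.conjV_conjV n Z).symm⟩
  -- r* and the intersection
  set rstar := Stmt9Aux.conjSubmodule n rcheck with hrstar
  have hinter : rcheck ⊓ rstar = complexify n L := by
    ext Z
    rw [Submodule.mem_inf, ← claim2 Z]
    constructor
    · rintro ⟨h1, h2⟩
      obtain ⟨Y, hY, hYZ⟩ := (Stmt9Aux.mem_conjSubmodule n).mp h2
      exact ⟨h1, Y, hY, hYZ.symm⟩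
    · rintro ⟨h1, Y, hY, hZY⟩
      exact ⟨h1, (Stmt9Aux.mem_conjSubmodule n).mpr ⟨Y, hY, hZY.symm⟩⟩
  -- dimensions
  have hr2 : Module.finrank ℂ rstar = n := by
    rw [hrstar, Stmt9Aux.finrank_conjSubmodule, hdim]
  have hsup : Module.finrank ℂ (rcheck ⊔ rstar : Submodule ℂ (CPhase n))
      + Module.finrank ℂ (complexify n L) = n + n := by
    rw [← hinter, Submodule.finrank_sup_add_finrank_inf_eq, hdim, hr2]
  have hperp := Stmt9Aux.finrank_skewPerp n (complexify n L)
  -- inclusion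
  have hle : rcheck ⊔ rstar ≤ skewPerpC n (complexify n L) := by
    refine sup_le ?_ ?_
    · intro Y hY
      rw [Stmt9Aux.mem_skewPerpC]
      intro X hX
      exact hiso Y hY X (hsub hX)
    · rintro Z hZ
      obtain ⟨W, hW, rfl⟩ := (Stmt9Aux.mem_conjSubmodule n).mp hZ
      rw [Stmt9Aux.mem_skewPerpC]
      intro X hX
      have hX' : conjV n X ∈ rcheck := hsub (hconjmem hX)
      calc symplFormC n (conjV n W) X
          = symplFormC n (conjV n W) (conjV n (conjV n X)) := by
            rw [Stmt9Aux.conjV_conjV]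
        _ = (starRingEnd ℂ) (symplFormC n W (conjV n X)) := Stmt9Aux.symplFormC_conj n _ _
        _ = 0 := by rw [hiso W hW _ hX', map_zero]
  have heq : rcheck ⊔ rstar = skewPerpC n (complexify n L) :=
    Submodule.eq_of_le_of_finrank_eq hle (by omega)
  refine ⟨fun Z => ?_, claim2⟩
  rw [← heq, Submodule.mem_sup]
  constructor
  · rintro ⟨y, hy, z, hz, rfl⟩
    obtain ⟨Y₂, hY₂, rfl⟩ := (Stmt9Aux.mem_conjSubmodule n).mp hz
    exact ⟨y, hy, Y₂, hY₂, rfl⟩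
  · rintro ⟨Y₁, h₁, Y₂, h₂, rfl⟩
    exact ⟨Y₁, h₁, conjV n Y₂, (Stmt9Aux.mem_conjSubmodule n).mpr ⟨Y₂, h₂, rfl⟩, rfl⟩
end
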